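/- arXiv:2605.11239 — 2 statements merged into one kernel-verified Lean document; each statement's English description precedes it below -/
import Mathlib

section
/- For any nonempty D_r ⊆ D, let θ̂* and θ̂_r* denote the unique minimizers of L̂_D and L̂_{D_r}, and let Δα_r* ∈ ℝ^{d_out·n} be the vector with top block (1/λ) ∇_{f^lin(X_f, θ̂*)} L̂_D and bottom block −(1/λ)( ∇_{f^lin(X_r, θ̂_r*)} L̂_{D_r} − ∇_{f^lin(X_r, θ̂*)} L̂_D ), where D_f := D \ D_r. Then for every x ∈ ℝ^{d_in}, the exact change in the linearized model output caused by removing D_f is f^lin(x, θ̂_r*) − f^lin(x, θ̂*) = K(x, X) Δα_r*. -/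
open Finset Matrix

noncomputable section

/-- Squared ℓ₂ norm of a finitely-indexed real vector. -/
def sqnorm {ι : Type*} [Fintype ι] (v : ι → ℝ) : ℝ := ∑ i, v i ^ 2

/-- The linearized model `f^lin(x, θ) = f(x, θ') + J(x)(θ - θ')`, where `f0 x = f(x, θ')`
and `J x` is the Jacobian of `f(x, ·)` at `θ'`. -/
def flin {din dout dθ : ℕ}
    (f0 : (Fin din → ℝ) → Fin dout → ℝ)
    (J : (Fin din → ℝ) → Matrix (Fin dout) (Fin dθ) ℝ)
    (θ' : Fin dθ → ℝ) (xt : Fin din → ℝ) (θ : Fin dθ → ℝ) : Fin dout → ℝ :=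
  f0 xt + J xt *ᵥ (θ - θ')

/-- Regularized empirical risk `L̂_S(θ)` of the linearized model over the subset of the
dataset indexed by `S`. -/
def empRisk {din dout dθ n : ℕ}
    (f0 : (Fin din → ℝ) → Fin dout → ℝ)
    (J : (Fin din → ℝ) → Matrix (Fin dout) (Fin dθ) ℝ)
    (θ' : Fin dθ → ℝ) (X : Fin n → Fin din → ℝ) (Y : Fin n → Fin dout → ℝ)
    (ℓ : (Fin dout → ℝ) → (Fin dout → ℝ) → ℝ) (lam : ℝ)
    (S : Finset (Fin n)) (θ : Fin dθ → ℝ) : ℝ :=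
  (S.card : ℝ)⁻¹ * ∑ i ∈ S, (ℓ (flin f0 J θ' (X i) θ) (Y i) + lam / 2 * sqnorm (θ - θ'))

/-- Gradient of the loss `ℓ(·, y)` in its first argument, as a vector. -/
def gradloss {dout : ℕ} (ℓ : (Fin dout → ℝ) → (Fin dout → ℝ) → ℝ)
    (ytgt u : Fin dout → ℝ) : Fin dout → ℝ :=
  fun a => fderiv ℝ (fun v => ℓ v ytgt) u (Pi.single a 1)

/-- Hessian of the loss `ℓ(·, y)` in its first argument, as a matrix. -/
def hessloss {dout : ℕ} (ℓ : (Fin dout → ℝ) → (Fin dout → ℝ) → ℝ)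
    (ytgt u : Fin dout → ℝ) : Fin dout → Fin dout → ℝ :=
  fun a b => fderiv ℝ (fun v => fderiv ℝ (fun w => ℓ w ytgt) v (Pi.single b 1)) u (Pi.single a 1)

/-- Stacked Jacobian `J(X) ∈ ℝ^{d_out·n × d_θ}`, whose `i`-th row block is `J(x_i)`. -/
def JX {din dout dθ n : ℕ}
    (J : (Fin din → ℝ) → Matrix (Fin dout) (Fin dθ) ℝ)
    (X : Fin n → Fin din → ℝ) : Matrix (Fin n × Fin dout) (Fin dθ) ℝ :=
  fun q p => J (X q.1) q.2 p

/-- Empirical NTK Gram matrix `K = K(X, X) = J(X) J(X)ᵀ`. -/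
def Kmat {din dout dθ n : ℕ}
    (J : (Fin din → ℝ) → Matrix (Fin dout) (Fin dθ) ℝ)
    (X : Fin n → Fin din → ℝ) : Matrix (Fin n × Fin dout) (Fin n × Fin dout) ℝ :=
  JX J X * (JX J X)ᵀ

/-- NTK row block `K(x, X) = J(x) J(X)ᵀ ∈ ℝ^{d_out × d_out·n}`. -/
def KxX {din dout dθ n : ℕ}
    (J : (Fin din → ℝ) → Matrix (Fin dout) (Fin dθ) ℝ)
    (X : Fin n → Fin din → ℝ) (xt : Fin din → ℝ) : Matrix (Fin dout) (Fin n × Fin dout) ℝ :=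
  J xt * (JX J X)ᵀ

/-- Reparameterization `φ(Δα) = θ̂* + J(X)ᵀ Δα`. -/
def phi {din dout dθ n : ℕ}
    (J : (Fin din → ℝ) → Matrix (Fin dout) (Fin dθ) ℝ)
    (X : Fin n → Fin din → ℝ) (θstar : Fin dθ → ℝ)
    (Δα : Fin n × Fin dout → ℝ) : Fin dθ → ℝ :=
  θstar + (JX J X)ᵀ *ᵥ Δα

/-- Reparameterized model `g^lin(x, Δα) = f^lin(x, θ̂*) + K(x, X) Δα`. -/
def glin {din dout dθ n : ℕ}
    (f0 : (Fin din → ℝ) → Fin dout → ℝ)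
    (J : (Fin din → ℝ) → Matrix (Fin dout) (Fin dθ) ℝ)
    (θ' : Fin dθ → ℝ) (X : Fin n → Fin din → ℝ) (θstar : Fin dθ → ℝ)
    (xt : Fin din → ℝ) (Δα : Fin n × Fin dout → ℝ) : Fin dout → ℝ :=
  flin f0 J θ' xt θstar + KxX J X xt *ᵥ Δα

/-- Dual risk `L̃_S(Δα) = (1/|S|) Σ_{(x,y)∈S} ( ℓ(g^lin(x, Δα), y) + (λ/2)‖φ(Δα) − θ'‖₂² )`. -/
def dualRisk {din dout dθ n : ℕ}
    (f0 : (Fin din → ℝ) → Fin dout → ℝ)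
    (J : (Fin din → ℝ) → Matrix (Fin dout) (Fin dθ) ℝ)
    (θ' : Fin dθ → ℝ) (X : Fin n → Fin din → ℝ) (Y : Fin n → Fin dout → ℝ)
    (ℓ : (Fin dout → ℝ) → (Fin dout → ℝ) → ℝ) (lam : ℝ) (θstar : Fin dθ → ℝ)
    (S : Finset (Fin n)) (Δα : Fin n × Fin dout → ℝ) : ℝ :=
  (S.card : ℝ)⁻¹ *
    ∑ i ∈ S, (ℓ (glin f0 J θ' X θstar (X i) Δα) (Y i) +
      lam / 2 * sqnorm (phi J X θstar Δα - θ'))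

/-- The dual coefficient vector `Δα_r*` of Proposition 3.1: on the forget indices
(`q.1 ∉ Dr`) it is `(1/λ) ∇_{f^lin(X_f, θ̂*)} L̂_D`, and on the retain indices (`q.1 ∈ Dr`)
it is `−(1/λ)( ∇_{f^lin(X_r, θ̂_r*)} L̂_{D_r} − ∇_{f^lin(X_r, θ̂*)} L̂_D )`. -/
def dalpha {din dout dθ n : ℕ}
    (f0 : (Fin din → ℝ) → Fin dout → ℝ)
    (J : (Fin din → ℝ) → Matrix (Fin dout) (Fin dθ) ℝ)
    (θ' : Fin dθ → ℝ) (X : Fin n → Fin din → ℝ) (Y : Fin n → Fin dout → ℝ)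
    (ℓ : (Fin dout → ℝ) → (Fin dout → ℝ) → ℝ) (lam : ℝ)
    (Dr : Finset (Fin n)) (θstar θrstar : Fin dθ → ℝ) :
    Fin n × Fin dout → ℝ :=
  fun q =>
    if q.1 ∈ Dr then
      -lam⁻¹ * ((Dr.card : ℝ)⁻¹ * gradloss ℓ (Y q.1) (flin f0 J θ' (X q.1) θrstar) q.2
        - (n : ℝ)⁻¹ * gradloss ℓ (Y q.1) (flin f0 J θ' (X q.1) θstar) q.2)
    else
      lam⁻¹ * ((n : ℝ)⁻¹ * gradloss ℓ (Y q.1) (flin f0 J θ' (X q.1) θstar) q.2)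

lemma dlin_eval {dout : ℕ} (D : (Fin dout → ℝ) →L[ℝ] ℝ) (w : Fin dout → ℝ) :
    D w = ∑ a, w a * D (Pi.single a 1) := by
  have hw : w = ∑ a, (w a) • (Pi.single a 1 : Fin dout → ℝ) := by
    funext j
    simp [Pi.single_apply, Finset.sum_apply, mul_ite]
  calc D w = D (∑ a, (w a) • (Pi.single a 1 : Fin dout → ℝ)) := by rw [← hw]
    _ = ∑ a, w a * D (Pi.single a 1) := by
        rw [map_sum]; simp [smul_eq_mul]

lemma hasFDerivAt_flin {din dout dθ : ℕ}
    (f0 : (Fin din → ℝ) → Fin dout → ℝ)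
    (J : (Fin din → ℝ) → Matrix (Fin dout) (Fin dθ) ℝ)
    (θ' : Fin dθ → ℝ) (xt : Fin din → ℝ) (θm : Fin dθ → ℝ) :
    HasFDerivAt (flin f0 J θ' xt)
      (LinearMap.toContinuousLinearMap ((J xt).mulVecLin)) θm := by
  set L := LinearMap.toContinuousLinearMap ((J xt).mulVecLin) with hL
  have h1 : HasFDerivAt (fun θ : Fin dθ → ℝ => L (θ - θ')) L θm := by
    have := (L.hasFDerivAt (x := θm - θ')).comp θm
      ((hasFDerivAt_id θm).sub_const θ')
    simpa using this
  have h2 := h1.const_add (f0 xt)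
  have heq : flin f0 J θ' xt = fun θ => f0 xt + L (θ - θ') := by
    funext θ
    simp [flin, hL, Matrix.mulVecLin_apply]
  rw [heq]; exact h2

lemma hasFDerivAt_sq {dθ : ℕ} (θ' θm : Fin dθ → ℝ) :
    HasFDerivAt (fun θ : Fin dθ → ℝ => sqnorm (θ - θ'))
      (∑ p, (2 * (θm p - θ' p)) • (ContinuousLinearMap.proj p : (Fin dθ → ℝ) →L[ℝ] ℝ)) θm := by
  have h : (fun θ : Fin dθ → ℝ => sqnorm (θ - θ')) = fun θ => ∑ p, (θ p - θ' p) ^ 2 := by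
    funext θ; simp [sqnorm]
  rw [h]
  apply HasFDerivAt.fun_sum
  intro p _
  have hp : HasFDerivAt (fun θ : Fin dθ → ℝ => θ p - θ' p)
      (ContinuousLinearMap.proj p : (Fin dθ → ℝ) →L[ℝ] ℝ) θm := by
    simpa using ((ContinuousLinearMap.proj p : (Fin dθ → ℝ) →L[ℝ] ℝ).hasFDerivAt (x := θm)).sub_const (θ' p)
  have hm := hp.mul hp
  have : (fun y : Fin dθ → ℝ => (y p - θ' p) ^ 2) = fun y => (y p - θ' p) * (y p - θ' p) := by
    funext y; ring
  rw [this]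
  exact hm.congr_fderiv (by ext v; simp; ring)

lemma stationarity {din dout dθ n : ℕ}
    (f0 : (Fin din → ℝ) → Fin dout → ℝ)
    (J : (Fin din → ℝ) → Matrix (Fin dout) (Fin dθ) ℝ)
    (θ' : Fin dθ → ℝ) (X : Fin n → Fin din → ℝ) (Y : Fin n → Fin dout → ℝ)
    (ℓ : (Fin dout → ℝ) → (Fin dout → ℝ) → ℝ) (lam : ℝ)
    (hdiff : ∀ ytgt, Differentiable ℝ fun u => ℓ u ytgt)
    (S : Finset (Fin n)) (hS : S.Nonempty) (θm : Fin dθ → ℝ)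
    (hmin : ∀ θ, empRisk f0 J θ' X Y ℓ lam S θm ≤ empRisk f0 J θ' X Y ℓ lam S θ) :
    ∀ p, lam * (θm p - θ' p)
      + (S.card : ℝ)⁻¹ * ∑ i ∈ S, ∑ a,
          gradloss ℓ (Y i) (flin f0 J θ' (X i) θm) a * J (X i) a p = 0 := by
  have hc : (S.card : ℝ) ≠ 0 := Nat.cast_ne_zero.mpr (Finset.card_ne_zero.mpr hS)
  set u : Fin n → Fin dout → ℝ := fun i => flin f0 J θ' (X i) θm with hu
  set D : Fin n → ((Fin dout → ℝ) →L[ℝ] ℝ) :=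
    fun i => fderiv ℝ (fun v => ℓ v (Y i)) (u i) with hD
  set Lsq : (Fin dθ → ℝ) →L[ℝ] ℝ :=
    ∑ p, (2 * (θm p - θ' p)) • (ContinuousLinearMap.proj p : (Fin dθ → ℝ) →L[ℝ] ℝ) with hLsq
  set F' : (Fin dθ → ℝ) →L[ℝ] ℝ :=
    (S.card : ℝ)⁻¹ • ∑ i ∈ S,
      ((D i).comp (LinearMap.toContinuousLinearMap ((J (X i)).mulVecLin))
        + (lam / 2) • Lsq) with hF'
  have hF : HasFDerivAt (empRisk f0 J θ' X Y ℓ lam S) F' θm := by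
    have hsum : HasFDerivAt
        (fun θ => ∑ i ∈ S, (ℓ (flin f0 J θ' (X i) θ) (Y i) + lam / 2 * sqnorm (θ - θ')))
        (∑ i ∈ S, ((D i).comp (LinearMap.toContinuousLinearMap ((J (X i)).mulVecLin))
          + (lam / 2) • Lsq)) θm := by
      apply HasFDerivAt.fun_sum
      intro i _
      have hℓ : HasFDerivAt (fun θ => ℓ (flin f0 J θ' (X i) θ) (Y i))
          ((D i).comp (LinearMap.toContinuousLinearMap ((J (X i)).mulVecLin))) θm :=
        by have := (((hdiff (Y i)) (u i)).hasFDerivAt).comp θm (hasFDerivAt_flin f0 J θ' (X i) θm); exact this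
      exact hℓ.add ((hasFDerivAt_sq θ' θm).const_mul (lam / 2))
    have := hsum.const_mul ((S.card : ℝ)⁻¹)
    exact this
  have hloc : IsLocalMin (empRisk f0 J θ' X Y ℓ lam S) θm :=
    Filter.Eventually.of_forall hmin
  have h0 : F' = 0 := by rw [← hF.fderiv]; exact hloc.fderiv_eq_zero
  intro p
  have hp := ContinuousLinearMap.ext_iff.mp h0 (Pi.single p 1)
  have hLsqv : Lsq (Pi.single p 1) = 2 * (θm p - θ' p) := by
    rw [hLsq]
    simp [ContinuousLinearMap.sum_apply, ContinuousLinearMap.proj_apply, Pi.single_apply,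
      mul_ite, Finset.sum_ite_eq']
  have hDv : ∀ i, (D i) ((J (X i)).mulVecLin (Pi.single p 1))
      = ∑ a, gradloss ℓ (Y i) (flin f0 J θ' (X i) θm) a * J (X i) a p := by
    intro i
    rw [dlin_eval]
    apply Finset.sum_congr rfl
    intro a _
    have h1 : (J (X i)).mulVecLin (Pi.single p 1) a = J (X i) a p := by
      simp [Matrix.mulVecLin_apply, Matrix.mulVec_single]
    rw [h1, mul_comm]
    rfl
  rw [hF'] at hp
  simp only [ContinuousLinearMap.smul_apply, ContinuousLinearMap.sum_apply,
    ContinuousLinearMap.add_apply, ContinuousLinearMap.comp_apply,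
    LinearMap.coe_toContinuousLinearMap', ContinuousLinearMap.zero_apply, smul_eq_mul] at hp
  rw [Finset.sum_congr rfl (fun i _ => by rw [hDv i, hLsqv])] at hp
  rw [Finset.sum_add_distrib, Finset.sum_const, nsmul_eq_mul] at hp
  have : (S.card : ℝ)⁻¹ * (S.card : ℝ) = 1 := inv_mul_cancel₀ hc
  field_simp at hp ⊢
  linarith [hp]

/-- the exact change in the linearized model output caused by removing
`D_f = D \ D_r` is `f^lin(x, θ̂_r*) − f^lin(x, θ̂*) = K(x, X) Δα_r*` for every test
input `x`. -/
theorem stmt_13 {din dout dθ n : ℕ} (hn : 0 < n)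
    (f0 : (Fin din → ℝ) → Fin dout → ℝ)
    (J : (Fin din → ℝ) → Matrix (Fin dout) (Fin dθ) ℝ)
    (θ' : Fin dθ → ℝ) (X : Fin n → Fin din → ℝ) (Y : Fin n → Fin dout → ℝ)
    (ℓ : (Fin dout → ℝ) → (Fin dout → ℝ) → ℝ) (lam : ℝ)
    (hℓ0 : ∀ u ytgt, 0 ≤ ℓ u ytgt)
    (hconv : ∀ ytgt, ConvexOn ℝ Set.univ fun u => ℓ u ytgt)
    (hdiff : ∀ ytgt, Differentiable ℝ fun u => ℓ u ytgt)
    (hlam : 0 < lam)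
    (Dr : Finset (Fin n)) (hDr : Dr.Nonempty)
    (θstar θrstar : Fin dθ → ℝ)
    (hmin : ∀ θ : Fin dθ → ℝ,
      empRisk f0 J θ' X Y ℓ lam Finset.univ θstar ≤ empRisk f0 J θ' X Y ℓ lam Finset.univ θ)
    (hminr : ∀ θ : Fin dθ → ℝ,
      empRisk f0 J θ' X Y ℓ lam Dr θrstar ≤ empRisk f0 J θ' X Y ℓ lam Dr θ) :
    ∀ xt : Fin din → ℝ,
      flin f0 J θ' xt θrstar - flin f0 J θ' xt θstar =
        KxX J X xt *ᵥ dalpha f0 J θ' X Y ℓ lam Dr θstar θrstar := by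
  have hlam0 : lam ≠ 0 := ne_of_gt hlam
  have huniv : (Finset.univ : Finset (Fin n)).Nonempty := ⟨⟨0, hn⟩, Finset.mem_univ _⟩
  have hstat := stationarity f0 J θ' X Y ℓ lam hdiff Finset.univ huniv θstar hmin
  have hstatr := stationarity f0 J θ' X Y ℓ lam hdiff Dr hDr θrstar hminr
  have key : θrstar - θstar = (JX J X)ᵀ *ᵥ dalpha f0 J θ' X Y ℓ lam Dr θstar θrstar := by
    funext p
    have h1 := hstat p
    have h2 := hstatr p
    rw [Finset.card_univ, Fintype.card_fin] at h1
    set g : Fin n → Fin dout → ℝ :=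
      fun i => gradloss ℓ (Y i) (flin f0 J θ' (X i) θstar) with hg
    set gr : Fin n → Fin dout → ℝ :=
      fun i => gradloss ℓ (Y i) (flin f0 J θ' (X i) θrstar) with hgr
    have hR : ((JX J X)ᵀ *ᵥ dalpha f0 J θ' X Y ℓ lam Dr θstar θrstar) p
        = ∑ i, ∑ a, J (X i) a p * dalpha f0 J θ' X Y ℓ lam Dr θstar θrstar (i, a) := by
      simp [Matrix.mulVec, Matrix.transpose_apply, JX, dotProduct, Fintype.sum_prod_type]
    have hrow : ∀ i, (∑ a, J (X i) a p * dalpha f0 J θ' X Y ℓ lam Dr θstar θrstar (i, a))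
        = (if i ∈ Dr then -(lam⁻¹ * ((Dr.card : ℝ)⁻¹ * ∑ a, gr i a * J (X i) a p)) else 0)
          + lam⁻¹ * ((n : ℝ)⁻¹ * ∑ a, g i a * J (X i) a p) := by
      intro i
      by_cases hi : i ∈ Dr
      · simp only [hi, if_true]
        rw [Finset.mul_sum, Finset.mul_sum, Finset.mul_sum, Finset.mul_sum, ← Finset.sum_neg_distrib,
          ← Finset.sum_add_distrib]
        apply Finset.sum_congr rfl
        intro a _
        simp only [dalpha, hi, if_true, hg, hgr]
        ring
      · simp only [hi, if_false, zero_add]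
        rw [Finset.mul_sum, Finset.mul_sum]
        apply Finset.sum_congr rfl
        intro a _
        simp only [dalpha, hi, if_false, hg]
        ring
    rw [hR, Finset.sum_congr rfl (fun i _ => hrow i), Finset.sum_add_distrib,
      Finset.sum_ite_mem, Finset.univ_inter, ← Finset.mul_sum, ← Finset.mul_sum,
      Finset.sum_neg_distrib, ← Finset.mul_sum, ← Finset.mul_sum]
    have e1 : (n : ℝ)⁻¹ * ∑ i, ∑ a, g i a * J (X i) a p = -(lam * (θstar p - θ' p)) := by
      linarith [h1]
    have e2 : (Dr.card : ℝ)⁻¹ * ∑ i ∈ Dr, ∑ a, gr i a * J (X i) a p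
        = -(lam * (θrstar p - θ' p)) := by linarith [h2]
    rw [Pi.sub_apply, e1, e2]
    field_simp
    ring
  intro xt
  have hKV : KxX J X xt *ᵥ dalpha f0 J θ' X Y ℓ lam Dr θstar θrstar
      = J xt *ᵥ ((JX J X)ᵀ *ᵥ dalpha f0 J θ' X Y ℓ lam Dr θstar θrstar) := by
    rw [Matrix.mulVec_mulVec]; rfl
  rw [hKV, ← key]
  have : θrstar - θstar = (θrstar - θ') - (θstar - θ') := by abel
  rw [this, Matrix.mulVec_sub]
  funext a
  simp [flin]
end
end

section
/- For any nonempty D_r ⊆ D, let θ̂* and θ̂_r* denote the unique minimizers of L̂_D and L̂_{D_r}, and define Δα_r* ∈ ℝ^{d_out·n} as in Proposition 3.1 (top block (1/λ) ∇_{f^lin(X_f, θ̂*)} L̂_D over D_f := D \ D_r, bottom block −(1/λ)( ∇_{f^lin(X_r, θ̂_r*)} L̂_{D_r} − ∇_{f^lin(X_r, θ̂*)} L̂_D ) over D_r). Then for every test pair (x_t, y_t) ∈ ℝ^{d_in} × ℝ^{d_out}, the exact change in regularized test loss satisfies ℓ(f^lin(x_t, θ̂_r*), y_t) + (λ/2)‖θ̂_r*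 − θ'‖₂² = ℓ(g^lin(x_t, Δα_r*), y_t) + (λ/2)‖φ(Δα_r*) − θ'‖₂², i.e., L̂_{{(x_t,y_t)}}(θ̂_r*) = L̃_{{(x_t,y_t)}}(Δα_r*). -/
open Finset Matrix

noncomputable section

lemma myaux_fderiv_apply {dout : ℕ} (ℓ : (Fin dout → ℝ) → (Fin dout → ℝ) → ℝ)
    (y u w : Fin dout → ℝ) :
    fderiv ℝ (fun v => ℓ v y) u w = ∑ a, w a * gradloss ℓ y u a := by
  conv_lhs => rw [← Finset.univ_sum_single w]
  rw [map_sum]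
  congr 1; funext a
  have : (Pi.single a (w a) : Fin dout → ℝ) = w a • (Pi.single a (1:ℝ) : Fin dout → ℝ) := by
    rw [← Pi.single_smul, smul_eq_mul, mul_one]
  rw [this, _root_.map_smul, smul_eq_mul]; rfl

lemma myaux_flin_hasFDerivAt {din dout dθ : ℕ}
    (f0 : (Fin din → ℝ) → Fin dout → ℝ)
    (J : (Fin din → ℝ) → Matrix (Fin dout) (Fin dθ) ℝ)
    (θ' : Fin dθ → ℝ) (x : Fin din → ℝ) (θ0 : Fin dθ → ℝ) :
    HasFDerivAt (fun θ => flin f0 J θ' x θ)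
      (LinearMap.toContinuousLinearMap (𝕜 := ℝ) (J x).mulVecLin) θ0 := by
  have hM : HasFDerivAt (fun θ : Fin dθ → ℝ => J x *ᵥ θ)
      (LinearMap.toContinuousLinearMap (𝕜 := ℝ) (J x).mulVecLin) (θ0 - θ') :=
    (LinearMap.toContinuousLinearMap (𝕜 := ℝ) (J x).mulVecLin).hasFDerivAt
  have hsub : HasFDerivAt (fun θ : Fin dθ → ℝ => θ - θ')
      (ContinuousLinearMap.id ℝ (Fin dθ → ℝ)) θ0 := (hasFDerivAt_id θ0).sub_const θ'
  have := (hM.comp θ0 hsub).const_add (f0 x)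
  simpa [flin, Function.comp] using this

lemma myaux_sq_hasFDerivAt {dθ : ℕ} (θ' θ0 : Fin dθ → ℝ) :
    HasFDerivAt (fun θ : Fin dθ → ℝ => sqnorm (θ - θ'))
      (∑ p, ((θ0 p - θ' p) • (ContinuousLinearMap.proj (R := ℝ) (φ := fun _ : Fin dθ => ℝ) p)
          + (θ0 p - θ' p) • (ContinuousLinearMap.proj (R := ℝ) (φ := fun _ : Fin dθ => ℝ) p))) θ0 := by
  have h : ∀ p : Fin dθ, HasFDerivAt (fun θ : Fin dθ → ℝ => (θ p - θ' p)^2)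
      ((θ0 p - θ' p) • (ContinuousLinearMap.proj (R := ℝ) (φ := fun _ : Fin dθ => ℝ) p)
        + (θ0 p - θ' p) • (ContinuousLinearMap.proj (R := ℝ) (φ := fun _ : Fin dθ => ℝ) p)) θ0 := by
    intro p
    have h1 : HasFDerivAt (fun θ : Fin dθ → ℝ => θ p)
        (ContinuousLinearMap.proj (R := ℝ) (φ := fun _ : Fin dθ => ℝ) p) θ0 :=
      (ContinuousLinearMap.proj (R := ℝ) (φ := fun _ : Fin dθ => ℝ) p).hasFDerivAt
    have h2 := h1.sub_const (θ' p)
    simpa [sq] using h2.fun_mul h2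
  have := HasFDerivAt.fun_sum (fun p (_ : p ∈ Finset.univ) => h p)
  simpa [sqnorm] using this

lemma myaux_stationarity {din dout dθ n : ℕ}
    (f0 : (Fin din → ℝ) → Fin dout → ℝ)
    (J : (Fin din → ℝ) → Matrix (Fin dout) (Fin dθ) ℝ)
    (θ' : Fin dθ → ℝ) (X : Fin n → Fin din → ℝ) (Y : Fin n → Fin dout → ℝ)
    (ℓ : (Fin dout → ℝ) → (Fin dout → ℝ) → ℝ) (lam : ℝ)
    (hdiff : ∀ ytgt, Differentiable ℝ fun u => ℓ u ytgt)
    (S : Finset (Fin n)) (hS : S.Nonempty) (θ0 : Fin dθ → ℝ)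
    (hmin : ∀ θ, empRisk f0 J θ' X Y ℓ lam S θ0 ≤ empRisk f0 J θ' X Y ℓ lam S θ) :
    ∀ p, lam * (θ0 p - θ' p)
      = -((S.card : ℝ)⁻¹ * ∑ i ∈ S, ∑ a, J (X i) a p * gradloss ℓ (Y i) (flin f0 J θ' (X i) θ0) a) := by
  -- total derivative
  have hterm : ∀ i : Fin n, HasFDerivAt
      (fun θ => ℓ (flin f0 J θ' (X i) θ) (Y i) + lam / 2 * sqnorm (θ - θ'))
      (((fderiv ℝ (fun v => ℓ v (Y i)) (flin f0 J θ' (X i) θ0)).comp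
          (LinearMap.toContinuousLinearMap (𝕜 := ℝ) (J (X i)).mulVecLin))
        + (lam / 2) • (∑ p, ((θ0 p - θ' p) • ContinuousLinearMap.proj p
          + (θ0 p - θ' p) • ContinuousLinearMap.proj p))) θ0 := by
    intro i
    have h1 := ((hdiff (Y i)) (flin f0 J θ' (X i) θ0)).hasFDerivAt.comp θ0
      (myaux_flin_hasFDerivAt f0 J θ' (X i) θ0)
    exact h1.add ((myaux_sq_hasFDerivAt θ' θ0).const_mul (lam / 2))
  have htot : HasFDerivAt (empRisk f0 J θ' X Y ℓ lam S)
      ((S.card : ℝ)⁻¹ • ∑ i ∈ S,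
        (((fderiv ℝ (fun v => ℓ v (Y i)) (flin f0 J θ' (X i) θ0)).comp
          (LinearMap.toContinuousLinearMap (𝕜 := ℝ) (J (X i)).mulVecLin))
        + (lam / 2) • (∑ p, ((θ0 p - θ' p) • ContinuousLinearMap.proj p
          + (θ0 p - θ' p) • ContinuousLinearMap.proj p)))) θ0 :=
    (HasFDerivAt.fun_sum (fun i (_ : i ∈ S) => hterm i)).const_mul _
  have hloc : IsLocalMin (empRisk f0 J θ' X Y ℓ lam S) θ0 := Filter.Eventually.of_forall hmin
  have hzero := hloc.hasFDerivAt_eq_zero htot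
  intro p
  have h0 := congrArg (fun (L : (Fin dθ → ℝ) →L[ℝ] ℝ) => L (Pi.single p 1)) hzero
  simp only [ContinuousLinearMap.smul_apply, ContinuousLinearMap.sum_apply,
    ContinuousLinearMap.add_apply, ContinuousLinearMap.comp_apply,
    ContinuousLinearMap.proj_apply, ContinuousLinearMap.zero_apply,
    LinearMap.coe_toContinuousLinearMap', Matrix.mulVecLin_apply, smul_eq_mul] at h0
  have hMi : ∀ i : Fin n, (J (X i)) *ᵥ (Pi.single p 1) = fun a => J (X i) a p := by
    intro i; funext a; simp [Matrix.mulVec_single]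
  simp only [myaux_fderiv_apply, hMi, mul_one, Pi.single_apply] at h0
  simp only [mul_ite, mul_one, mul_zero, Finset.sum_add_distrib, Finset.sum_ite_eq', Finset.mem_univ, if_true] at h0
  rw [Finset.sum_const, nsmul_eq_mul] at h0
  have hc : (S.card : ℝ) ≠ 0 := Nat.cast_ne_zero.2 (Finset.card_ne_zero.2 hS)
  field_simp at h0 ⊢
  linarith


lemma myaux_key {din dout dθ n : ℕ} (hn : 0 < n)
    (f0 : (Fin din → ℝ) → Fin dout → ℝ)
    (J : (Fin din → ℝ) → Matrix (Fin dout) (Fin dθ) ℝ)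
    (θ' : Fin dθ → ℝ) (X : Fin n → Fin din → ℝ) (Y : Fin n → Fin dout → ℝ)
    (ℓ : (Fin dout → ℝ) → (Fin dout → ℝ) → ℝ) (lam : ℝ)
    (hdiff : ∀ ytgt, Differentiable ℝ fun u => ℓ u ytgt)
    (hlam : 0 < lam)
    (Dr : Finset (Fin n)) (hDr : Dr.Nonempty)
    (θstar θrstar : Fin dθ → ℝ)
    (hmin : ∀ θ : Fin dθ → ℝ,
      empRisk f0 J θ' X Y ℓ lam Finset.univ θstar ≤ empRisk f0 J θ' X Y ℓ lam Finset.univ θ)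
    (hminr : ∀ θ : Fin dθ → ℝ,
      empRisk f0 J θ' X Y ℓ lam Dr θrstar ≤ empRisk f0 J θ' X Y ℓ lam Dr θ) :
    (JX J X)ᵀ *ᵥ dalpha f0 J θ' X Y ℓ lam Dr θstar θrstar = θrstar - θstar := by
  have hst := myaux_stationarity f0 J θ' X Y ℓ lam hdiff Finset.univ
    ⟨⟨0, hn⟩, Finset.mem_univ _⟩ θstar hmin
  have hstr := myaux_stationarity f0 J θ' X Y ℓ lam hdiff Dr hDr θrstar hminr
  funext p
  have hmv : ((JX J X)ᵀ *ᵥ dalpha f0 J θ' X Y ℓ lam Dr θstar θrstar) p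
      = ∑ i, ∑ a, J (X i) a p * dalpha f0 J θ' X Y ℓ lam Dr θstar θrstar (i, a) := by
    simp [Matrix.mulVec, dotProduct, Matrix.transpose_apply, JX, Fintype.sum_prod_type]
  rw [hmv]
  have hper : ∀ i : Fin n, ∑ a, J (X i) a p * dalpha f0 J θ' X Y ℓ lam Dr θstar θrstar (i, a)
      = lam⁻¹ * ((n : ℝ)⁻¹ * ∑ a, J (X i) a p * gradloss ℓ (Y i) (flin f0 J θ' (X i) θstar) a)
        - (if i ∈ Dr then
            lam⁻¹ * ((Dr.card : ℝ)⁻¹ * ∑ a, J (X i) a p * gradloss ℓ (Y i) (flin f0 J θ' (X i) θrstar) a)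
          else 0) := by
    intro i
    by_cases hi : i ∈ Dr
    · simp only [dalpha, hi, if_true]
      rw [show (∑ a, J (X i) a p * (-lam⁻¹ *
          ((Dr.card : ℝ)⁻¹ * gradloss ℓ (Y i) (flin f0 J θ' (X i) θrstar) a
            - (n : ℝ)⁻¹ * gradloss ℓ (Y i) (flin f0 J θ' (X i) θstar) a)))
        = ∑ a, (lam⁻¹ * ((n : ℝ)⁻¹ * (J (X i) a p * gradloss ℓ (Y i) (flin f0 J θ' (X i) θstar) a))
            - lam⁻¹ * ((Dr.card : ℝ)⁻¹ * (J (X i) a p * gradloss ℓ (Y i) (flin f0 J θ' (X i) θrstar) a)))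
        from Finset.sum_congr rfl (fun a _ => by ring)]
      rw [Finset.sum_sub_distrib, ← Finset.mul_sum, ← Finset.mul_sum, ← Finset.mul_sum, ← Finset.mul_sum]
    · simp only [dalpha, hi, if_false]
      rw [show (∑ a, J (X i) a p * (lam⁻¹ *
          ((n : ℝ)⁻¹ * gradloss ℓ (Y i) (flin f0 J θ' (X i) θstar) a)))
        = ∑ a, lam⁻¹ * ((n : ℝ)⁻¹ * (J (X i) a p * gradloss ℓ (Y i) (flin f0 J θ' (X i) θstar) a))
        from Finset.sum_congr rfl (fun a _ => by ring)]
      rw [← Finset.mul_sum, ← Finset.mul_sum, sub_zero]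
  rw [Finset.sum_congr rfl (fun i _ => hper i), Finset.sum_sub_distrib]
  rw [Finset.sum_ite_mem, Finset.univ_inter, ← Finset.mul_sum, ← Finset.mul_sum,
    ← Finset.mul_sum, ← Finset.mul_sum]
  have h1 := hst p
  have h2 := hstr p
  simp only [Finset.card_univ, Fintype.card_fin] at h1
  have hlne : lam ≠ 0 := ne_of_gt hlam
  have e1 : (n : ℝ)⁻¹ * ∑ i, ∑ a, J (X i) a p * gradloss ℓ (Y i) (flin f0 J θ' (X i) θstar) a
      = -(lam * (θstar p - θ' p)) := by rw [h1]; ring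
  have e2 : (Dr.card : ℝ)⁻¹ * ∑ i ∈ Dr, ∑ a, J (X i) a p * gradloss ℓ (Y i) (flin f0 J θ' (X i) θrstar) a
      = -(lam * (θrstar p - θ' p)) := by rw [h2]; ring
  rw [e1, e2]
  rw [Pi.sub_apply]
  field_simp
  ring

/-- for every test pair `(x_t, y_t)`, the exact change in regularized test
loss satisfies `L̂_{{(x_t, y_t)}}(θ̂_r*) = L̃_{{(x_t, y_t)}}(Δα_r*)`, i.e.
`ℓ(f^lin(x_t, θ̂_r*), y_t) + (λ/2)‖θ̂_r* − θ'‖₂² =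
  ℓ(g^lin(x_t, Δα_r*), y_t) + (λ/2)‖φ(Δα_r*) − θ'‖₂²`. -/
theorem stmt_16 {din dout dθ n : ℕ} (hn : 0 < n)
    (f0 : (Fin din → ℝ) → Fin dout → ℝ)
    (J : (Fin din → ℝ) → Matrix (Fin dout) (Fin dθ) ℝ)
    (θ' : Fin dθ → ℝ) (X : Fin n → Fin din → ℝ) (Y : Fin n → Fin dout → ℝ)
    (ℓ : (Fin dout → ℝ) → (Fin dout → ℝ) → ℝ) (lam : ℝ)
    (hℓ0 : ∀ u ytgt, 0 ≤ ℓ u ytgt)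
    (hconv : ∀ ytgt, ConvexOn ℝ Set.univ fun u => ℓ u ytgt)
    (hdiff : ∀ ytgt, Differentiable ℝ fun u => ℓ u ytgt)
    (hlam : 0 < lam)
    (Dr : Finset (Fin n)) (hDr : Dr.Nonempty)
    (θstar θrstar : Fin dθ → ℝ)
    (hmin : ∀ θ : Fin dθ → ℝ,
      empRisk f0 J θ' X Y ℓ lam Finset.univ θstar ≤ empRisk f0 J θ' X Y ℓ lam Finset.univ θ)
    (hminr : ∀ θ : Fin dθ → ℝ,
      empRisk f0 J θ' X Y ℓ lam Dr θrstar ≤ empRisk f0 J θ' X Y ℓ lam Dr θ) :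
    ∀ (xt : Fin din → ℝ) (yt : Fin dout → ℝ),
      ℓ (flin f0 J θ' xt θrstar) yt + lam / 2 * sqnorm (θrstar - θ') =
        ℓ (glin f0 J θ' X θstar xt (dalpha f0 J θ' X Y ℓ lam Dr θstar θrstar)) yt +
          lam / 2 * sqnorm (phi J X θstar (dalpha f0 J θ' X Y ℓ lam Dr θstar θrstar) - θ') := by
  intro xt yt
  have hkey := myaux_key hn f0 J θ' X Y ℓ lam hdiff hlam Dr hDr θstar θrstar hmin hminr
  have hphi : phi J X θstar (dalpha f0 J θ' X Y ℓ lam Dr θstar θrstar) = θrstar := by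
    unfold phi; rw [hkey]; abel
  have hg : glin f0 J θ' X θstar xt (dalpha f0 J θ' X Y ℓ lam Dr θstar θrstar)
      = flin f0 J θ' xt θrstar := by
    unfold glin KxX
    rw [← Matrix.mulVec_mulVec, hkey]
    unfold flin
    rw [add_assoc, ← Matrix.mulVec_add]
    congr 2
    abel
  rw [hg, hphi]
end
end
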